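/- Let T be a tree rooted at r with a shadow-closed link set E that covers T. Then there exists a minimum-cardinality feasible set F ⊆ E such that exactly one link of F is incident to each leaf of T; consequently, the links of F having both endpoints in L form a matching on the leaves. -/

import Mathlib

open scoped Classical

/-- The set of tree edges lying on a path (necessarily the unique one in a tree)
between `u` and `v`. -/
def pathEdges {V : Type*} (T : SimpleGraph V) (u v : V) : Set (Sym2 V) :=
  {e | ∃ p : T.Walk u v, p.IsPath ∧ e ∈ p.edges}

/-- The set of vertices lying on a path between `u` and `v`. -/
def pathSupport {V : Type*} (T : SimpleGraph V) (u v : V) : Set V :=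
  {w | ∃ p : T.Walk u v, p.IsPath ∧ w ∈ p.support}

/-- The link `l` covers the tree edge `e` : `e` lies on the tree path between the
endpoints of `l`. -/
def Covers {V : Type*} (T : SimpleGraph V) (l e : Sym2 V) : Prop :=
  ∃ u v, l = s(u, v) ∧ e ∈ pathEdges T u v

/-- A set `F` of links covers the tree `T` (is feasible): every edge of `T` is covered
by some link of `F`. -/
def CoversTree {V : Type*} (T : SimpleGraph V) (F : Set (Sym2 V)) : Prop :=
  ∀ e ∈ T.edgeSet, ∃ l ∈ F, Covers T l e

/-- `x` belongs to the subtree `T_v` of `T` rooted at `r`: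
`v` lies on the tree path from `x` to the root `r`. -/
def InSubtree {V : Type*} (T : SimpleGraph V) (r v x : V) : Prop :=
  v ∈ pathSupport T x r

/-- A leaf is a vertex with exactly one neighbour (degree one). -/
def IsLeaf {V : Type*} (T : SimpleGraph V) (v : V) : Prop :=
  ∃! w, T.Adj v w

/-- `y` is the parent of `x` in the tree `T` rooted at `r`. -/
def IsParent {V : Type*} (T : SimpleGraph V) (r x y : V) : Prop :=
  T.Adj x y ∧ InSubtree T r y x

/-- `w` is the least common ancestor of `u` and `v` in the tree `T` rooted at `r`. -/
def IsLCA {V : Type*} (T : SimpleGraph V) (r u v w : V) : Prop :=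
  w ∈ pathSupport T u v ∧ w ∈ pathSupport T u r ∧ w ∈ pathSupport T v r

/-- The link `cd` is a shadow of the link `ab`: the tree path between `c` and `d` is a
strict subpath of the tree path between `a` and `b`. -/
def IsShadow {V : Type*} (T : SimpleGraph V) (c d a b : V) : Prop :=
  c ≠ d ∧ pathEdges T c d ⊂ pathEdges T a b

/-- The link set `E` is shadow-closed: every shadow of a link of `E` belongs to `E`. -/
def ShadowClosed {V : Type*} (T : SimpleGraph V) (E : Finset (Sym2 V)) : Prop :=
  ∀ a b c d, s(a, b) ∈ E → IsShadow T c d a b → s(c, d) ∈ E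

/-- `F ⊆ E` is a shadows-minimal feasible solution: it is a minimum-cardinality cover of
`T` among subsets of `E`, and replacing any link of `F` by one of its shadows renders it
infeasible. -/
def ShadowsMinimal {V : Type*} (T : SimpleGraph V) (E F : Finset (Sym2 V)) : Prop :=
  F ⊆ E ∧ CoversTree T ↑F ∧
    (∀ F' : Finset (Sym2 V), F' ⊆ E → CoversTree T ↑F' → F.card ≤ F'.card) ∧
    ∀ a b c d, s(a, b) ∈ F → IsShadow T c d a b →
      ¬ CoversTree T ↑(insert s(c, d) (F.erase s(a, b)))

/-- `deg_F(x)`: the number of links of `F` incident to `x`. -/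
noncomputable def degF {V : Type*} (F : Finset (Sym2 V)) (x : V) : ℕ :=
  (F.filter (fun e => x ∈ e)).card

/-- `s` is a stem with twin link `ab`: an internal vertex whose children are exactly the
two leaves `a` and `b`, with `ab ∈ E`. -/
def IsStem {V : Type*} (T : SimpleGraph V) (r : V) (E : Finset (Sym2 V)) (s a b : V) : Prop :=
  a ≠ b ∧ ¬ IsLeaf T s ∧ IsLeaf T a ∧ IsLeaf T b ∧
    IsParent T r a s ∧ IsParent T r b s ∧
    (∀ x, IsParent T r x s → x = a ∨ x = b) ∧ s(a, b) ∈ E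

/-- The subtree `T_v` is `x`-closed: every link of `E` incident to `x` has both endpoints
in `T_v`. -/
def XClosed {V : Type*} (T : SimpleGraph V) (r : V) (E : Finset (Sym2 V)) (v x : V) : Prop :=
  ∀ l ∈ E, x ∈ l → ∀ y ∈ l, InSubtree T r v y

/-- The subtree `T_v` is leaf-closed: it is `x`-closed for every leaf `x ∈ L_v`. -/
def LeafClosed {V : Type*} (T : SimpleGraph V) (r : V) (E : Finset (Sym2 V)) (v : V) : Prop :=
  ∀ x, IsLeaf T x → InSubtree T r v x → XClosed T r E v x

/-- The subtree `T_v` is minimally leaf-closed: it is leaf-closed and no subtree rooted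
at a strict descendant of `v` is leaf-closed. -/
def MinLeafClosed {V : Type*} (T : SimpleGraph V) (r : V) (E : Finset (Sym2 V)) (v : V) : Prop :=
  LeafClosed T r E v ∧ ∀ u, InSubtree T r v u → u ≠ v → ¬ LeafClosed T r E u

/-- `ax` is an up-link of the leaf `a`: a link of `E` incident to `a` whose least common
ancestor with `a` is closest to the root among all links of `E` incident to `a`. -/
def IsUpLink {V : Type*} (T : SimpleGraph V) (r : V) (E : Finset (Sym2 V)) (a x : V) : Prop :=
  s(a, x) ∈ E ∧ ∀ y w w', s(a, y) ∈ E → IsLCA T r a x w → IsLCA T r a y w' →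
    T.dist w r ≤ T.dist w' r

/-- A matching: a set of links (pairs of distinct vertices) no two of which share an
endpoint. -/
def IsMatching {V : Type*} (M : Finset (Sym2 V)) : Prop :=
  (∀ l ∈ M, ¬ l.IsDiag) ∧ ∀ l ∈ M, ∀ l' ∈ M, l ≠ l' → ∀ x, x ∈ l → x ∉ l'


section AuxStatement15

variable {V : Type*} {T : SimpleGraph V}

lemma pathEdges_eq_of_isPath (hT : T.IsTree) {x y : V} (p : T.Walk x y) (hp : p.IsPath) :
    pathEdges T x y = {e | e ∈ p.edges} := by
  ext e
  constructor
  · rintro ⟨q, hq, he⟩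
    rwa [(hT.existsUnique_path x y).unique hq hp] at he
  · intro he; exact ⟨p, hp, he⟩

lemma pathEdges_symm (x y : V) : pathEdges T x y = pathEdges T y x := by
  ext e
  constructor <;> rintro ⟨p, hp, he⟩ <;>
    exact ⟨p.reverse, hp.reverse, by simpa using he⟩

lemma mem_pathEdges_of_covers {a u : V} {e : Sym2 V} (hl : Covers T (s(a,u)) e) :
    e ∈ pathEdges T a u := by
  obtain ⟨u', v', hluv, he⟩ := hl
  rcases Sym2.eq_iff.mp hluv with ⟨rfl, rfl⟩ | ⟨rfl, rfl⟩
  · exact he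
  · rwa [pathEdges_symm]

lemma not_leaf_of_two_adj {b x z : V} (hx : T.Adj b x) (hz : T.Adj b z) (hne : x ≠ z) :
    ¬ IsLeaf T b := fun ⟨_, _, hn⟩ => hne ((hn x hx).trans (hn z hz).symm)

lemma leaf_endpoint_of_mem_support {a : V} (ha : IsLeaf T a) :
    ∀ {x y : V} (p : T.Walk x y), p.IsPath → a ∈ p.support → a = x ∨ a = y := by
  intro x y p
  induction p with
  | nil => intro _ h; left; simpa using h
  | @cons x w y h p ih =>
    intro hp hmem
    rw [SimpleGraph.Walk.support_cons, List.mem_cons] at hmem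
    rcases hmem with rfl | hmem
    · exact Or.inl rfl
    · rcases ih hp.of_cons hmem with rfl | rfl
      · cases p with
        | nil => exact Or.inr rfl
        | @cons _ z _ h2 p2 =>
          exfalso
          have hxz : x ≠ z := by
            intro hxz
            have hx : x ∉ (SimpleGraph.Walk.cons h2 p2).support :=
              ((SimpleGraph.Walk.cons_isPath_iff _ _).mp hp).2
            exact hx (by rw [hxz]; simp)
          exact not_leaf_of_two_adj h.symm h2 hxz ha
      · exact Or.inr rfl

lemma mem_link_of_covers_pendant {a s : V} (ha : IsLeaf T a) {l : Sym2 V}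
    (hc : Covers T l s(a, s)) : a ∈ l := by
  obtain ⟨u, v, rfl, p, hp, he⟩ := hc
  have hmem := SimpleGraph.Walk.fst_mem_support_of_mem_edges p he
  rcases leaf_endpoint_of_mem_support ha p hp hmem with rfl | rfl
  · exact Sym2.mem_mk_left _ _
  · exact Sym2.mem_mk_right _ _

/-- number of leaf endpoints of a link -/
noncomputable def leafWeight (T : SimpleGraph V) : Sym2 V → ℕ :=
  Sym2.lift ⟨fun x y => (if IsLeaf T x then 1 else 0) + (if IsLeaf T y then 1 else 0),
    fun x y => by dsimp only; omega⟩

lemma leafWeight_le_two (l : Sym2 V) : leafWeight T l ≤ 2 := by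
  induction l using Sym2.ind with
  | _ x y => simp only [leafWeight, Sym2.lift_mk]; split_ifs <;> omega

end AuxStatement15

/-- for a shadow-closed link set `E` covering `T`, there is a
minimum-cardinality feasible `F ⊆ E` with exactly one link of `F` incident to each leaf;
consequently the leaf-to-leaf links of `F` form a matching on the leaves. -/
theorem statement15 {V : Type*} [Fintype V] (T : SimpleGraph V) (hT : T.IsTree) (r : V)
    (hr : ¬ IsLeaf T r) (E : Finset (Sym2 V))
    (hlinks : ∀ l ∈ E, ¬ l.IsDiag)
    (hE : ShadowClosed T E)
    (hEcov : CoversTree T ↑E) :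
    ∃ F ⊆ E, CoversTree T ↑F ∧
      (∀ F' : Finset (Sym2 V), F' ⊆ E → CoversTree T ↑F' → F.card ≤ F'.card) ∧
      (∀ a, IsLeaf T a → degF F a = 1) ∧
      IsMatching (F.filter (fun l => ∀ x ∈ l, IsLeaf T x)) := by
  classical
  have phi_le : ∀ G : Finset (Sym2 V), (∑ l ∈ G, leafWeight T l) ≤ 2 * G.card := by
    intro G
    calc (∑ l ∈ G, leafWeight T l) ≤ ∑ _l ∈ G, 2 :=
          Finset.sum_le_sum (fun l _ => leafWeight_le_two l)
      _ = 2 * G.card := by rw [Finset.sum_const, smul_eq_mul, mul_comm]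
  have hSne : E ∈ E.powerset.filter (fun G : Finset (Sym2 V) => CoversTree T ↑G) :=
    Finset.mem_filter.mpr ⟨Finset.mem_powerset.mpr (subset_refl E), hEcov⟩
  obtain ⟨F, hFS, hFmin⟩ := Finset.exists_min_image
    (E.powerset.filter (fun G : Finset (Sym2 V) => CoversTree T ↑G))
    (fun G => (2 * E.card + 1) * G.card + ∑ l ∈ G, leafWeight T l) ⟨E, hSne⟩
  have hFsub : F ⊆ E := Finset.mem_powerset.mp (Finset.mem_filter.mp hFS).1
  have hFcov : CoversTree T ↑F := (Finset.mem_filter.mp hFS).2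
  have hcard : ∀ F' : Finset (Sym2 V), F' ⊆ E → CoversTree T ↑F' → F.card ≤ F'.card := by
    intro F' hsub hcov
    by_contra hlt
    push_neg at hlt
    have hmem : F' ∈ E.powerset.filter (fun G : Finset (Sym2 V) => CoversTree T ↑G) :=
      Finset.mem_filter.mpr ⟨Finset.mem_powerset.mpr hsub, hcov⟩
    have h0 := hFmin F' hmem
    have h2 : (2 * E.card + 1) * (F'.card + 1) ≤ (2 * E.card + 1) * F.card :=
      Nat.mul_le_mul_left _ hlt
    rw [Nat.mul_add, Nat.mul_one] at h2
    have h1 : (∑ l ∈ F', leafWeight T l) ≤ 2 * E.card :=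
      le_trans (phi_le F') (by have := Finset.card_le_card hsub; omega)
    generalize hA : (2 * E.card + 1) * F'.card = A at h0 h2
    generalize hB : (2 * E.card + 1) * F.card = B at h0 h2
    generalize (∑ l ∈ F, leafWeight T l) = sF at h0
    generalize (∑ l ∈ F', leafWeight T l) = sF' at h0 h1
    omega
  -- at most one link of F at each leaf
  have hdeg2 : ∀ a, IsLeaf T a → ∀ l1 ∈ F, ∀ l2 ∈ F, a ∈ l1 → a ∈ l2 → l1 = l2 := by
    intro a ha l1 hl1 l2 hl2 ha1 ha2
    by_contra hne
    obtain ⟨u, rfl⟩ := Sym2.mem_iff_exists.mp ha1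
    obtain ⟨v, rfl⟩ := Sym2.mem_iff_exists.mp ha2
    have hu : u ≠ a := fun h =>
      hlinks _ (hFsub hl1) (by rw [h]; exact Sym2.mk_isDiag_iff.mpr rfl)
    have hv : v ≠ a := fun h =>
      hlinks _ (hFsub hl2) (by rw [h]; exact Sym2.mk_isDiag_iff.mpr rfl)
    have huv : u ≠ v := fun h => hne (by rw [h])
    obtain ⟨p, hp, -⟩ := hT.existsUnique_path a u
    obtain ⟨q, hq, -⟩ := hT.existsUnique_path a v
    obtain ⟨b, h1, p', rfl⟩ := p.exists_eq_cons_of_ne (Ne.symm hu)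
    obtain ⟨b2, h2, q', rfl⟩ := q.exists_eq_cons_of_ne (Ne.symm hv)
    have hb2 : b = b2 := by
      obtain ⟨n, -, hn⟩ := ha
      exact (hn b h1).trans (hn b2 h2).symm
    subst hb2
    have hePEq : pathEdges T a v = {e | e ∈ (SimpleGraph.Walk.cons h2 q').edges} :=
      pathEdges_eq_of_isPath hT _ hq
    have hePEp : pathEdges T a u = {e | e ∈ (SimpleGraph.Walk.cons h1 p').edges} :=
      pathEdges_eq_of_isPath hT _ hp
    have hsav_ne : s(a,v) ≠ s(a,u) := fun h => huv (Sym2.congr_right.mp h).symm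
    by_cases hbu : b = u
    · -- the whole path a–u is the single pendant edge: drop the link s(a,u)
      subst hbu
      have hp'nil : p' = SimpleGraph.Walk.nil := SimpleGraph.Walk.isPath_iff_eq_nil.mp hp.of_cons
      subst hp'nil
      have hErase_cov : CoversTree T ↑(F.erase s(a,b)) := by
        intro e he
        obtain ⟨l, hl, hcov⟩ := hFcov e he
        by_cases hl_eq : l = s(a,b)
        · subst hl_eq
          have hee : e ∈ pathEdges T a b := mem_pathEdges_of_covers hcov
          rw [hePEp] at hee
          simp only [Set.mem_setOf_eq, SimpleGraph.Walk.edges_cons,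
            SimpleGraph.Walk.edges_nil, List.mem_cons, List.not_mem_nil, or_false] at hee
          refine ⟨s(a,v), Finset.mem_erase.mpr ⟨hsav_ne, hl2⟩, a, v, rfl, ?_⟩
          rw [hePEq]
          simp [hee]
        · exact ⟨l, Finset.mem_erase.mpr ⟨hl_eq, hl⟩, hcov⟩
      have hle := hcard _ (Finset.Subset.trans (Finset.erase_subset _ _) hFsub) hErase_cov
      have hlt' := Finset.card_erase_lt_of_mem hl1
      omega
    · -- replace s(a,u) by its shadow s(b,u)
      have hp' : p'.IsPath := hp.of_cons
      have hnotmem : a ∉ p'.support := ((SimpleGraph.Walk.cons_isPath_iff h1 p').mp hp).2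
      have hPEbu : pathEdges T b u = {e | e ∈ p'.edges} := pathEdges_eq_of_isPath hT p' hp'
      have hshadow : IsShadow T b u a u := by
        refine ⟨hbu, ?_⟩
        rw [hPEbu, hePEp, Set.ssubset_def]
        constructor
        · intro e he
          exact List.mem_cons_of_mem _ he
        · intro hsup
          have h' : s(a,b) ∈ p'.edges := hsup (by simp)
          exact hnotmem (SimpleGraph.Walk.fst_mem_support_of_mem_edges p' h')
      have hbuE : s(b,u) ∈ E := hE a u b u (hFsub hl1) hshadow
      have hsbu_ne : s(b,u) ≠ s(a,u) := by
        intro h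
        rcases Sym2.eq_iff.mp h with ⟨hba, -⟩ | ⟨hbu', -⟩
        · exact h1.ne' hba
        · exact hbu hbu'
      have hcov_main : CoversTree T ↑(insert s(b,u) (F.erase s(a,u))) := by
        intro e he
        obtain ⟨l, hl, hcov⟩ := hFcov e he
        by_cases hl_eq : l = s(a,u)
        · subst hl_eq
          have hee : e ∈ pathEdges T a u := mem_pathEdges_of_covers hcov
          rw [hePEp] at hee
          simp only [Set.mem_setOf_eq, SimpleGraph.Walk.edges_cons, List.mem_cons] at hee
          rcases hee with rfl | hee
          · refine ⟨s(a,v), Finset.mem_insert_of_mem (Finset.mem_erase.mpr ⟨hsav_ne, hl2⟩),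
              a, v, rfl, ?_⟩
            rw [hePEq]
            simp
          · exact ⟨s(b,u), Finset.mem_insert_self _ _, b, u, rfl, by rw [hPEbu]; exact hee⟩
        · exact ⟨l, Finset.mem_insert_of_mem (Finset.mem_erase.mpr ⟨hl_eq, hl⟩), hcov⟩
      have hbu_notinF : s(b,u) ∉ F := by
        intro hmem
        have heq : insert s(b,u) (F.erase s(a,u)) = F.erase s(a,u) :=
          Finset.insert_eq_self.mpr (Finset.mem_erase.mpr ⟨hsbu_ne, hmem⟩)
        have hle := hcard _ (Finset.Subset.trans (Finset.erase_subset _ _) hFsub)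
          (heq ▸ hcov_main)
        have hlt' := Finset.card_erase_lt_of_mem hl1
        omega
      have hnotin_erase : s(b,u) ∉ F.erase s(a,u) :=
        fun h => hbu_notinF (Finset.mem_of_mem_erase h)
      have hcardF' : (insert s(b,u) (F.erase s(a,u))).card = F.card := by
        rw [Finset.card_insert_of_notMem hnotin_erase, Finset.card_erase_of_mem hl1]
        have hpos : 0 < F.card := Finset.card_pos.mpr ⟨_, hl1⟩
        omega
      -- b is not a leaf
      obtain ⟨z, h3, p'', rfl⟩ := p'.exists_eq_cons_of_ne hbu
      have hz : z ≠ a := by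
        rintro rfl
        refine hnotmem ?_
        rw [SimpleGraph.Walk.support_cons]
        exact List.mem_cons_of_mem _ p''.start_mem_support
      have hbleaf : ¬ IsLeaf T b := not_leaf_of_two_adj h1.symm h3 (Ne.symm hz)
      have hphi : (∑ l ∈ insert s(b,u) (F.erase s(a,u)), leafWeight T l)
          < ∑ l ∈ F, leafWeight T l := by
        rw [Finset.sum_insert hnotin_erase, ← Finset.add_sum_erase F _ hl1]
        have h1w : leafWeight T s(b,u) < leafWeight T s(a,u) := by
          simp only [leafWeight, Sym2.lift_mk]
          rw [if_pos ha, if_neg hbleaf]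
          omega
        omega
      have hmemS : insert s(b,u) (F.erase s(a,u)) ∈ E.powerset.filter (fun G : Finset (Sym2 V) => CoversTree T ↑G) :=
        Finset.mem_filter.mpr ⟨Finset.mem_powerset.mpr
          (Finset.insert_subset hbuE (Finset.Subset.trans (Finset.erase_subset _ _) hFsub)),
          hcov_main⟩
      have hmle := hFmin _ hmemS
      rw [hcardF'] at hmle
      exact absurd (Nat.le_of_add_le_add_left hmle) (Nat.not_le.mpr hphi)
  have hdeg1 : ∀ a, IsLeaf T a → degF F a = 1 := by
    intro a ha
    have ha' := ha
    obtain ⟨s, hs, -⟩ := ha'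
    have hedge : s(a, s) ∈ T.edgeSet := hs
    obtain ⟨l, hl, hcov⟩ := hFcov _ hedge
    have hal : a ∈ l := mem_link_of_covers_pendant ha hcov
    have hmem : l ∈ F.filter (fun e => a ∈ e) := Finset.mem_filter.mpr ⟨hl, hal⟩
    have hsub1 : F.filter (fun e => a ∈ e) ⊆ {l} := by
      intro l' hl'
      obtain ⟨hl'F, hal'⟩ := Finset.mem_filter.mp hl'
      rw [Finset.mem_singleton]
      exact hdeg2 a ha l' hl'F l hl hal' hal
    have hle := Finset.card_le_card hsub1
    rw [Finset.card_singleton] at hle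
    have hpos : 0 < (F.filter (fun e => a ∈ e)).card := Finset.card_pos.mpr ⟨l, hmem⟩
    simp only [degF]
    omega
  refine ⟨F, hFsub, hFcov, hcard, hdeg1, ?_, ?_⟩
  · intro l hl
    exact hlinks l (hFsub (Finset.mem_filter.mp hl).1)
  · intro l hl l' hl' hne x hx hx'
    obtain ⟨hlF, hleaves⟩ := Finset.mem_filter.mp hl
    exact hne (hdeg2 x (hleaves x hx) l hlF l' (Finset.mem_filter.mp hl').1 hx hx')
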